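/- Let ξ > 0, C > 0, δ > 0, and let c : ℤ → ℂ satisfy c_{−k} = conj(c_k) and |c_k| ≤ C·e^{−δ·|k|} for all k ∈ ℤ. For x ≥ 0 set ρ̃(x) = Σ_{k∈ℤ} c_k·ρ_{−ξ,k}(x). If ρ̃(x) is a positive real number for every x > 0, then Σ_{k∈ℤ} c_k/(ξ − i·k) is a real number and is ≤ 0. -/

import Mathlib

set_option maxHeartbeats 1000000

open Filter Topology intervalIntegral MeasureTheory

/-- `ρ_{ξ,k}(x) = (2/π)(2 w e^{wx} √x ∫₀^{√x} e^{-w u²} du + 1)` with `w = ξ + i k`. -/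
noncomputable def rho (ξ : ℝ) (k : ℤ) (x : ℝ) : ℂ :=
  (2 / (Real.pi : ℂ)) *
    (2 * ((ξ : ℂ) + (k : ℂ) * Complex.I) *
        Complex.exp (((ξ : ℂ) + (k : ℂ) * Complex.I) * (x : ℂ)) * (Real.sqrt x : ℂ) *
        (∫ u in (0:ℝ)..Real.sqrt x,
          Complex.exp (-(((ξ : ℂ) + (k : ℂ) * Complex.I)) * (u : ℂ) ^ 2)) + 1)

noncomputable def Phi (a : ℂ) (u : ℝ) : ℂ :=
  Complex.exp (a * (u:ℂ)^2) * ((2*a*(u:ℂ))⁻¹ + (4*a^2*(u:ℂ)^3)⁻¹)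

lemma hasDerivAt_Phi (a : ℂ) (ha : a ≠ 0) (u : ℝ) (hu : u ≠ 0) :
    HasDerivAt (Phi a) (Complex.exp (a*(u:ℂ)^2) * (1 - 3/(4*a^2*(u:ℂ)^4))) u := by
  have hc : (u:ℂ) ≠ 0 := Complex.ofReal_ne_zero.mpr hu
  have hid : HasDerivAt (fun z:ℂ => z) 1 (u:ℂ) := hasDerivAt_id _
  have he : HasDerivAt (fun z:ℂ => Complex.exp (a*z^2))
      (Complex.exp (a*(u:ℂ)^2) * (a * (2*(u:ℂ)^1*1))) (u:ℂ) := ((hid.pow 2).const_mul a).cexp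
  have hr1 : HasDerivAt (fun z:ℂ => (2*a*z)⁻¹) (-(2*a*1) / (2*a*(u:ℂ))^2) (u:ℂ) :=
    (hid.const_mul (2*a)).inv (by simp [ha, hc])
  have hr2 : HasDerivAt (fun z:ℂ => (4*a^2*z^3)⁻¹)
      (-(4*a^2*(3*(u:ℂ)^2*1)) / (4*a^2*(u:ℂ)^3)^2) (u:ℂ) :=
    ((hid.pow 3).const_mul (4*a^2)).inv (by simp [ha, hc])
  have key := (he.mul (hr1.add hr2)).comp_ofReal
  refine key.congr_deriv ?_
  symm
  have h2 : (2*a*(u:ℂ)) ≠ 0 := by simp [ha, hc]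
  have h4 : (4*a^2*(u:ℂ)^3) ≠ 0 := by simp [ha, hc]
  simp only [Pi.add_apply]
  field_simp
  ring

lemma real_int_bound (ξ : ℝ) (hξ : 0 < ξ) (b T : ℝ) (hb1 : 1 ≤ b) (hb5 : 5/ξ ≤ b^2)
    (hbT : b ≤ T) :
    ∫ u in b..T, Real.exp (ξ*u^2)/u^4 ≤ Real.exp (ξ*T^2)/(ξ*T^5) := by
  set ψ : ℝ → ℝ := fun u => Real.exp (ξ*u^2)/u^5 with hψ
  set ψ' : ℝ → ℝ := fun u => Real.exp (ξ*u^2)*(2*ξ/u^4 - 5/u^6) with hψ'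
  have hbpos : (0:ℝ) < b := lt_of_lt_of_le one_pos hb1
  have hTpos : (0:ℝ) < T := lt_of_lt_of_le hbpos hbT
  have hne : ∀ u : ℝ, u ∈ Set.uIcc b T → u ≠ 0 := by
    intro u hu
    rw [Set.uIcc_of_le hbT] at hu
    exact ne_of_gt (lt_of_lt_of_le hbpos hu.1)
  have hderiv : ∀ u ∈ Set.uIcc b T, HasDerivAt ψ (ψ' u) u := by
    intro u hu
    have hu0 : u ≠ 0 := hne u hu
    have h1 : HasDerivAt (fun v:ℝ => Real.exp (ξ*v^2)) (Real.exp (ξ*u^2) * (ξ*(2*u^1*1))) u :=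
      (((hasDerivAt_id u).pow 2).const_mul ξ).exp
    have h2 : HasDerivAt (fun v:ℝ => (v^5)⁻¹) (-(5*u^4*1)/(u^5)^2) u :=
      ((hasDerivAt_id u).pow 5).inv (pow_ne_zero 5 hu0)
    have key := h1.mul h2
    have : ψ = fun v => Real.exp (ξ*v^2) * (v^5)⁻¹ := by
      funext v; rw [hψ]; ring
    rw [this]
    refine key.congr_deriv ?_
    symm
    have e1 : u * u⁻¹ = 1 := mul_inv_cancel₀ hu0
    simp only [hψ']
    field_simp [hu0]
    ring
  have hcψ' : ContinuousOn ψ' (Set.uIcc b T) := by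
    apply ContinuousOn.mul (Continuous.continuousOn (by continuity))
    apply ContinuousOn.sub
    · exact ContinuousOn.div continuousOn_const (Continuous.continuousOn (by continuity))
        (fun u hu => pow_ne_zero 4 (hne u hu))
    · exact ContinuousOn.div continuousOn_const (Continuous.continuousOn (by continuity))
        (fun u hu => pow_ne_zero 6 (hne u hu))
  have hcf : ContinuousOn (fun u => Real.exp (ξ*u^2)/u^4) (Set.uIcc b T) :=
    ContinuousOn.div (Continuous.continuousOn (by continuity))
      (Continuous.continuousOn (by continuity)) (fun u hu => pow_ne_zero 4 (hne u hu))
  have hintf : IntervalIntegrable (fun u => Real.exp (ξ*u^2)/u^4) MeasureTheory.volume b T :=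
    hcf.intervalIntegrable
  have hintψ' : IntervalIntegrable ψ' MeasureTheory.volume b T := hcψ'.intervalIntegrable
  have hmono : ∫ u in b..T, Real.exp (ξ*u^2)/u^4 ≤ ∫ u in b..T, (1/ξ) * ψ' u := by
    apply integral_mono_on hbT hintf (hintψ'.const_mul _)
    intro u hu
    have hub : b ≤ u := hu.1
    have hu0 : 0 < u := lt_of_lt_of_le hbpos hub
    have hu2 : 5/ξ ≤ u^2 := le_trans hb5 (by nlinarith)
    have h5 : 5 ≤ ξ * u^2 := by
      rw [div_le_iff₀ hξ] at hu2; linarith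
    have h56 : 5/u^6 ≤ ξ/u^4 := by
      rw [div_le_div_iff₀ (by positivity) (by positivity)]
      nlinarith [pow_nonneg hu0.le 4]
    have : ξ/u^4 ≤ 2*ξ/u^4 - 5/u^6 := by
      have h2ξ : 2*ξ/u^4 = ξ/u^4 + ξ/u^4 := by ring
      linarith
    calc Real.exp (ξ*u^2)/u^4 = (1/ξ) * (Real.exp (ξ*u^2) * (ξ/u^4)) := by
          field_simp
      _ ≤ (1/ξ) * ψ' u := by
          apply mul_le_mul_of_nonneg_left _ (by positivity)
          exact mul_le_mul_of_nonneg_left this (Real.exp_pos _).le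
  have hFTC : ∫ u in b..T, ψ' u = ψ T - ψ b :=
    integral_eq_sub_of_hasDerivAt hderiv hintψ'
  have hψb : 0 ≤ ψ b := by rw [hψ]; positivity
  calc ∫ u in b..T, Real.exp (ξ*u^2)/u^4 ≤ ∫ u in b..T, (1/ξ) * ψ' u := hmono
    _ = (1/ξ) * (ψ T - ψ b) := by rw [intervalIntegral.integral_const_mul, hFTC]
    _ ≤ (1/ξ) * ψ T := by nlinarith [hψb, (by positivity : (0:ℝ) < 1/ξ)]
    _ = Real.exp (ξ*T^2)/(ξ*T^5) := by rw [hψ]; field_simp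

lemma core (ξ : ℝ) (hξ : 0 < ξ) : ∃ b : ℝ, 1 ≤ b ∧ ∃ D : ℝ, 0 < D ∧
    ∀ a : ℂ, a.re = ξ → ∀ T : ℝ, b ≤ T →
      ‖(T:ℂ)^2 * (1 - 2*a*(T:ℂ)*Complex.exp (-(a*(T:ℂ)^2)) *
          ∫ u in (0:ℝ)..T, Complex.exp (a*(u:ℂ)^2)) + 1/(2*a)‖ ≤ D * ‖a‖ / T^2 := by
  set b := max 1 (Real.sqrt (5/ξ)) with hbdef
  have hb1 : 1 ≤ b := le_max_left _ _
  have hb0 : (0:ℝ) < b := lt_of_lt_of_le one_pos hb1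
  have hb5 : 5/ξ ≤ b^2 := by
    have h1 : Real.sqrt (5/ξ) ^ 2 = 5/ξ := Real.sq_sqrt (by positivity)
    have h2 : Real.sqrt (5/ξ) ≤ b := le_max_right _ _
    nlinarith [Real.sqrt_nonneg (5/ξ)]
  set K0 := Real.exp (ξ*b^2) * (b + 1/(2*ξ) + 1/(4*ξ^2)) with hK0def
  have hK0 : 0 < K0 := by positivity
  refine ⟨b, hb1, 54*K0/ξ^3 + 3/(2*ξ^3), by positivity, ?_⟩
  intro a ha T hbT
  have hT1 : 1 ≤ T := le_trans hb1 hbT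
  have hT0 : (0:ℝ) < T := lt_of_lt_of_le one_pos hT1
  have haz : a ≠ 0 := by
    intro h; rw [h] at ha; simp at ha; exact hξ.ne ha
  have hA : ξ ≤ ‖a‖ := by
    rw [← ha]; exact Complex.re_le_norm a
  have hA0 : (0:ℝ) < ‖a‖ := lt_of_lt_of_le hξ hA
  -- norm of the exponential
  have hnorm : ∀ u : ℝ, ‖Complex.exp (a*(u:ℂ)^2)‖ = Real.exp (ξ*u^2) := by
    intro u
    rw [Complex.norm_exp]
    congr 1
    have h : a*(u:ℂ)^2 = a*((u^2:ℝ):ℂ) := by push_cast; ring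
    rw [h, Complex.mul_re, Complex.ofReal_re, Complex.ofReal_im, ha]
    ring
  have hcexp : Continuous (fun u:ℝ => Complex.exp (a*(u:ℂ)^2)) := by continuity
  have hne : ∀ u : ℝ, u ∈ Set.uIcc b T → u ≠ 0 := by
    intro u hu
    rw [Set.uIcc_of_le hbT] at hu
    exact ne_of_gt (lt_of_lt_of_le hb0 hu.1)
  -- integrals
  set G0 := ∫ u in (0:ℝ)..b, Complex.exp (a*(u:ℂ)^2) with hG0def
  set Gb := ∫ u in b..T, Complex.exp (a*(u:ℂ)^2) with hGbdef
  set J := ∫ u in b..T, Complex.exp (a*(u:ℂ)^2) * (3/(4*a^2*(u:ℂ)^4)) with hJdef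
  have hint0b : IntervalIntegrable (fun u:ℝ => Complex.exp (a*(u:ℂ)^2)) volume 0 b :=
    hcexp.intervalIntegrable _ _
  have hintbT : IntervalIntegrable (fun u:ℝ => Complex.exp (a*(u:ℂ)^2)) volume b T :=
    hcexp.intervalIntegrable _ _
  have hden : ∀ u : ℝ, u ∈ Set.uIcc b T → (4*a^2*(u:ℂ)^4) ≠ 0 := by
    intro u hu
    have : (u:ℂ) ≠ 0 := Complex.ofReal_ne_zero.mpr (hne u hu)
    simp [haz, this]
  have hcontJ : ContinuousOn (fun u:ℝ => Complex.exp (a*(u:ℂ)^2) * (3/(4*a^2*(u:ℂ)^4)))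
      (Set.uIcc b T) := by
    apply hcexp.continuousOn.mul
    exact ContinuousOn.div continuousOn_const
      (Continuous.continuousOn (by continuity)) hden
  have hintJ : IntervalIntegrable (fun u:ℝ => Complex.exp (a*(u:ℂ)^2) * (3/(4*a^2*(u:ℂ)^4)))
      volume b T := hcontJ.intervalIntegrable
  -- FTC for Phi
  have hFTC : ∫ u in b..T, (Complex.exp (a*(u:ℂ)^2) * (1 - 3/(4*a^2*(u:ℂ)^4)))
      = Phi a T - Phi a b := by
    apply integral_eq_sub_of_hasDerivAt
    · exact fun u hu => hasDerivAt_Phi a haz u (hne u hu)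
    · apply ContinuousOn.intervalIntegrable
      apply hcexp.continuousOn.mul
      exact continuousOn_const.sub (ContinuousOn.div continuousOn_const
        (Continuous.continuousOn (by continuity)) hden)
  have hGbJ : Gb - J = Phi a T - Phi a b := by
    rw [← hFTC, hGbdef, hJdef, ← integral_sub hintbT hintJ]
    congr 1
    funext u
    ring
  have hG : (∫ u in (0:ℝ)..T, Complex.exp (a*(u:ℂ)^2)) = G0 + Gb :=
    (integral_add_adjacent_intervals hint0b hintbT).symm
  -- the algebraic identity
  have hkey : (T:ℂ)^2 * (1 - 2*a*(T:ℂ)*Complex.exp (-(a*(T:ℂ)^2)) *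
      ∫ u in (0:ℝ)..T, Complex.exp (a*(u:ℂ)^2)) + 1/(2*a)
      = -(2*a*(T:ℂ)^3*(Complex.exp (a*(T:ℂ)^2))⁻¹*((G0 - Phi a b)+J)) := by
    rw [hG, Complex.exp_neg]
    have hGb2 : Gb = Phi a T - Phi a b + J := by rw [← hGbJ]; ring
    rw [hGb2]
    have hPhiT : Phi a T = Complex.exp (a*(T:ℂ)^2) * ((2*a*(T:ℂ))⁻¹ + (4*a^2*(T:ℂ)^3)⁻¹) := rfl
    rw [hPhiT]
    have hTc : (T:ℂ) ≠ 0 := Complex.ofReal_ne_zero.mpr hT0.ne'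
    have hE : Complex.exp (a*(T:ℂ)^2) ≠ 0 := Complex.exp_ne_zero _
    set E := Complex.exp (a*(T:ℂ)^2) with hEdef
    set Tc := (T:ℂ) with hTcdef
    have h2T : 2*a*Tc ≠ 0 := by simp [haz, hTc]
    have h3T : 2*a*Tc^3 ≠ 0 := by simp [haz, hTc]
    have e1a : 2*a*Tc^3*(2*a*Tc)⁻¹ = Tc^2 := by
      rw [show 2*a*Tc^3 = Tc^2*(2*a*Tc) by ring, mul_assoc, mul_inv_cancel₀ h2T, mul_one]
    have e1b : 2*a*Tc^3*(4*a^2*Tc^3)⁻¹ = 1/(2*a) := by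
      rw [show (4*a^2*Tc^3) = (2*a)*(2*a*Tc^3) by ring, mul_inv,
        show 2*a*Tc^3*((2*a)⁻¹*(2*a*Tc^3)⁻¹) = (2*a)⁻¹*(2*a*Tc^3*(2*a*Tc^3)⁻¹) by ring,
        mul_inv_cancel₀ h3T, mul_one, one_div]
    have expand : Tc^2 * (1 - 2*a*Tc*E⁻¹*(G0 + (E*((2*a*Tc)⁻¹ + (4*a^2*Tc^3)⁻¹) - Phi a b + J))) + 1/(2*a)
        = Tc^2 + 1/(2*a) - (E⁻¹*E)*(2*a*Tc^3*(2*a*Tc)⁻¹ + 2*a*Tc^3*(4*a^2*Tc^3)⁻¹)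
          - 2*a*Tc^3*E⁻¹*((G0 - Phi a b)+J) := by ring
    rw [expand, inv_mul_cancel₀ hE, one_mul, e1a, e1b]
    ring
  rw [hkey]
  set A := ‖a‖ with hAdef
  set e2 := Real.exp (ξ*T^2) with he2def
  have he2pos : 0 < e2 := Real.exp_pos _
  -- bound on K = G0 - Phi a b
  have hG0n : ‖G0‖ ≤ Real.exp (ξ*b^2) * b := by
    have h := intervalIntegral.norm_integral_le_of_norm_le_const
      (C := Real.exp (ξ*b^2)) (f := fun u:ℝ => Complex.exp (a*(u:ℂ)^2)) (a := (0:ℝ)) (b := b) ?_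
    · rw [hG0def]; simpa [abs_of_pos hb0] using h
    · intro u hu
      rw [Set.uIoc_of_le hb0.le] at hu
      obtain ⟨hu1, hu2⟩ := hu
      rw [hnorm u]
      exact Real.exp_le_exp.mpr (by nlinarith [mul_self_le_mul_self hu1.le hu2])
  have hPhibn : ‖Phi a b‖ ≤ Real.exp (ξ*b^2) * (1/(2*ξ) + 1/(4*ξ^2)) := by
    have hbc : ‖((b:ℝ):ℂ)‖ = b := by
      simp [abs_of_pos hb0]
    have h1 : ‖(2*a*(b:ℂ))⁻¹‖ ≤ 1/(2*ξ) := by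
      rw [norm_inv, norm_mul, norm_mul, hbc, one_div]
      have h2 : ‖(2:ℂ)‖ = 2 := by norm_num
      rw [h2]
      have hle : 2*ξ ≤ 2*A*b := by nlinarith
      exact inv_anti₀ (by positivity) hle
    have h2 : ‖(4*a^2*(b:ℂ)^3)⁻¹‖ ≤ 1/(4*ξ^2) := by
      rw [norm_inv, norm_mul, norm_mul, norm_pow, norm_pow, hbc, one_div]
      have h4 : ‖(4:ℂ)‖ = 4 := by norm_num
      rw [h4]
      have hA2 : ξ^2 ≤ A^2 := by nlinarith
      have hb3 : (1:ℝ) ≤ b^3 := one_le_pow₀ hb1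
      have hle : 4*ξ^2 ≤ 4*A^2*b^3 := by nlinarith [mul_le_mul_of_nonneg_left hb3 (by positivity : (0:ℝ) ≤ 4*A^2)]
      exact inv_anti₀ (by positivity) hle
    have : ‖Phi a b‖ ≤ Real.exp (ξ*b^2) * (‖(2*a*(b:ℂ))⁻¹‖ + ‖(4*a^2*(b:ℂ)^3)⁻¹‖) := by
      rw [show Phi a b = Complex.exp (a*((b:ℝ):ℂ)^2) * ((2*a*((b:ℝ):ℂ))⁻¹ + (4*a^2*((b:ℝ):ℂ)^3)⁻¹) from rfl]
      rw [norm_mul, hnorm b]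
      exact mul_le_mul_of_nonneg_left (norm_add_le _ _) (Real.exp_pos _).le
    calc ‖Phi a b‖ ≤ Real.exp (ξ*b^2) * (‖(2*a*(b:ℂ))⁻¹‖ + ‖(4*a^2*(b:ℂ)^3)⁻¹‖) := this
      _ ≤ Real.exp (ξ*b^2) * (1/(2*ξ) + 1/(4*ξ^2)) := by
          apply mul_le_mul_of_nonneg_left (add_le_add h1 h2) (Real.exp_pos _).le
  have hKn : ‖G0 - Phi a b‖ ≤ K0 := by
    calc ‖G0 - Phi a b‖ ≤ ‖G0‖ + ‖Phi a b‖ := norm_sub_le _ _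
      _ ≤ Real.exp (ξ*b^2) * b + Real.exp (ξ*b^2) * (1/(2*ξ) + 1/(4*ξ^2)) := add_le_add hG0n hPhibn
      _ = K0 := by rw [hK0def]; ring
  -- bound on J
  have hJn : ‖J‖ ≤ 3/(4*A^2) * (e2/(ξ*T^5)) := by
    have hgcont : ContinuousOn (fun u:ℝ => Real.exp (ξ*u^2) * (3/(4*A^2*u^4))) (Set.uIcc b T) := by
      apply ContinuousOn.mul
      · exact (Real.continuous_exp.comp (continuous_const.mul (continuous_pow 2))).continuousOn
      · exact ContinuousOn.div continuousOn_const
          (continuous_const.mul (continuous_pow 4)).continuousOn (fun u hu => by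
            have := hne u hu
            positivity)
    have hgint : IntervalIntegrable (fun u:ℝ => Real.exp (ξ*u^2) * (3/(4*A^2*u^4))) volume b T :=
      hgcont.intervalIntegrable
    have h1 : ‖J‖ ≤ |∫ u in b..T, Real.exp (ξ*u^2) * (3/(4*A^2*u^4))| := by
      rw [hJdef]
      apply intervalIntegral.norm_integral_le_abs_of_norm_le _ hgint
      apply MeasureTheory.ae_of_all
      intro u
      rw [norm_mul, hnorm u, norm_div, norm_mul, norm_mul, norm_pow, norm_pow]
      have h3 : ‖(3:ℂ)‖ = 3 := by norm_num
      have h4 : ‖(4:ℂ)‖ = 4 := by norm_num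
      have h5 : ‖((u:ℝ):ℂ)‖ = |u| := by rw [Complex.norm_real, Real.norm_eq_abs]
      rw [h3, h4, h5, Even.pow_abs (by decide)]
    have h2 : (0:ℝ) ≤ ∫ u in b..T, Real.exp (ξ*u^2) * (3/(4*A^2*u^4)) := by
      apply intervalIntegral.integral_nonneg hbT
      intro u _
      positivity
    have h3 : (∫ u in b..T, Real.exp (ξ*u^2) * (3/(4*A^2*u^4)))
        = (3/(4*A^2)) * ∫ u in b..T, Real.exp (ξ*u^2)/u^4 := by
      rw [← intervalIntegral.integral_const_mul]
      congr 1
      funext u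
      ring
    have h4 := real_int_bound ξ hξ b T hb1 hb5 hbT
    calc ‖J‖ ≤ |∫ u in b..T, Real.exp (ξ*u^2) * (3/(4*A^2*u^4))| := h1
      _ = ∫ u in b..T, Real.exp (ξ*u^2) * (3/(4*A^2*u^4)) := abs_of_nonneg h2
      _ = (3/(4*A^2)) * ∫ u in b..T, Real.exp (ξ*u^2)/u^4 := h3
      _ ≤ (3/(4*A^2)) * (Real.exp (ξ*T^2)/(ξ*T^5)) := by
          apply mul_le_mul_of_nonneg_left h4 (by positivity)
  -- exponential decay bound
  have hTexp : T^3 * e2⁻¹ ≤ 27/(ξ^3*T^3) := by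
    have hcube : ξ^3*T^6/27 ≤ e2 := by
      have h1 : ξ*T^2/3 + 1 ≤ Real.exp (ξ*T^2/3) := Real.add_one_le_exp _
      have h2 : e2 = (Real.exp (ξ*T^2/3))^3 := by
        rw [he2def, ← Real.exp_nat_mul]
        norm_num
        ring_nf
      have h3 : (ξ*T^2/3)^3 ≤ (ξ*T^2/3 + 1)^3 := by
        apply pow_le_pow_left₀ (by positivity)
        linarith
      calc ξ^3*T^6/27 = (ξ*T^2/3)^3 := by ring
        _ ≤ (ξ*T^2/3 + 1)^3 := h3
        _ ≤ (Real.exp (ξ*T^2/3))^3 := by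
            apply pow_le_pow_left₀ (by positivity) h1
        _ = e2 := h2.symm
    rw [mul_inv_le_iff₀ he2pos]
    have hd : (27/(ξ^3*T^3)) * (ξ^3*T^3) = 27 := div_mul_cancel₀ _ (by positivity)
    nlinarith [pow_pos hT0 3, pow_pos hξ 3, mul_pos (pow_pos hξ 3) (pow_pos hT0 3),
      div_pos (by norm_num : (0:ℝ) < 27) (mul_pos (pow_pos hξ 3) (pow_pos hT0 3))]
  -- assemble
  have hnorm_rhs : ‖-(2*a*(T:ℂ)^3*(Complex.exp (a*(T:ℂ)^2))⁻¹*((G0 - Phi a b)+J))‖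
      = 2*A*T^3*e2⁻¹*‖(G0 - Phi a b)+J‖ := by
    have hTcn : ‖((T:ℝ):ℂ)‖ = T := by
      rw [Complex.norm_real, Real.norm_eq_abs, abs_of_pos hT0]
    rw [norm_neg, norm_mul, norm_mul, norm_mul, norm_inv, hnorm T, norm_pow, hTcn, norm_mul]
    have h2n : ‖(2:ℂ)‖ = 2 := by norm_num
    rw [h2n, hAdef, he2def]
  rw [hnorm_rhs]
  have hsum : ‖(G0 - Phi a b)+J‖ ≤ K0 + 3/(4*A^2) * (e2/(ξ*T^5)) :=
    le_trans (norm_add_le _ _) (add_le_add hKn hJn)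
  calc 2*A*T^3*e2⁻¹*‖(G0 - Phi a b)+J‖
      ≤ 2*A*T^3*e2⁻¹*(K0 + 3/(4*A^2) * (e2/(ξ*T^5))) := by
        apply mul_le_mul_of_nonneg_left hsum (by positivity)
    _ = 2*A*K0*(T^3*e2⁻¹) + 2*A*T^3*e2⁻¹*(3/(4*A^2) * (e2/(ξ*T^5))) := by ring
    _ = 2*A*K0*(T^3*e2⁻¹) + 3/(2*A*ξ*T^2) := by
        congr 1
        field_simp
        ring
    _ ≤ 2*A*K0*(27/(ξ^3*T^3)) + 3/(2*A*ξ*T^2) := by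
        apply add_le_add_left
        apply mul_le_mul_of_nonneg_left hTexp (by positivity)
    _ ≤ (54*K0/ξ^3)*A/T^2 + (3/(2*ξ^3))*A/T^2 := by
        apply add_le_add
        · have hfrac : T^2/T^3 ≤ 1 := by
            rw [div_le_one (by positivity)]
            nlinarith [mul_le_mul_of_nonneg_left hT1 (sq_nonneg T)]
          calc 2*A*K0*(27/(ξ^3*T^3)) = ((54*K0/ξ^3)*A/T^2) * (T^2/T^3) := by
                field_simp
                ring
            _ ≤ ((54*K0/ξ^3)*A/T^2) * 1 :=
                mul_le_mul_of_nonneg_left hfrac (by positivity)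
            _ = (54*K0/ξ^3)*A/T^2 := mul_one _
        · have hAA : ξ^2 ≤ A^2 := by nlinarith
          have hstep : 3/(2*A*ξ*T^2) ≤ 3*A/(2*ξ^3*T^2) := by
            rw [div_le_div_iff₀ (by positivity) (by positivity)]
            nlinarith [mul_le_mul_of_nonneg_right hAA (by positivity : (0:ℝ) ≤ 6*ξ*T^2)]
          calc 3/(2*A*ξ*T^2) ≤ 3*A/(2*ξ^3*T^2) := hstep
            _ = (3/(2*ξ^3))*A/T^2 := by ring
    _ = (54*K0/ξ^3 + 3/(2*ξ^3)) * A / T^2 := by ring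

lemma rho_bound (ξ : ℝ) (hξ : 0 < ξ) : ∃ b : ℝ, 1 ≤ b ∧ ∃ D : ℝ, 0 < D ∧
    ∀ k : ℤ, ∀ x : ℝ, b^2 ≤ x →
      ‖(x:ℂ) * rho (-ξ) k x - (-(1/((Real.pi:ℂ)*((ξ:ℂ) - (k:ℂ)*Complex.I))))‖
        ≤ (2/Real.pi) * (D * ‖(ξ:ℂ) - (k:ℂ)*Complex.I‖ / x) := by
  obtain ⟨b, hb1, D, hD0, hcore⟩ := core ξ hξ
  refine ⟨b, hb1, D, hD0, ?_⟩
  intro k x hx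
  have hb0 : (0:ℝ) < b := lt_of_lt_of_le one_pos hb1
  have hx0 : (0:ℝ) < x := lt_of_lt_of_le (by nlinarith) hx
  set a : ℂ := (ξ:ℂ) - (k:ℂ)*Complex.I with hadef
  have ha : a.re = ξ := by simp [hadef]
  set T := Real.sqrt x with hTdef
  have hT2 : T^2 = x := Real.sq_sqrt hx0.le
  have hbT : b ≤ T := by
    rw [hTdef, show b = Real.sqrt (b^2) from (Real.sqrt_sq hb0.le).symm]
    exact Real.sqrt_le_sqrt hx
  have hw : ((-ξ:ℝ):ℂ) + (k:ℂ)*Complex.I = -a := by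
    rw [hadef]; push_cast; ring
  have hxc : ((x:ℝ):ℂ) = (T:ℂ)^2 := by
    rw [← hT2]; push_cast; ring
  have hxr : (x:ℂ) * rho (-ξ) k x - (-(1/((Real.pi:ℂ)*a)))
      = (2/(Real.pi:ℂ)) * ((T:ℂ)^2 * (1 - 2*a*(T:ℂ)*Complex.exp (-(a*(T:ℂ)^2)) *
          ∫ u in (0:ℝ)..T, Complex.exp (a*(u:ℂ)^2)) + 1/(2*a)) := by
    rw [rho, hw]
    have hint : (∫ u in (0:ℝ)..Real.sqrt x, Complex.exp (-(-a) * (u:ℂ)^2))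
        = ∫ u in (0:ℝ)..T, Complex.exp (a*(u:ℂ)^2) := by
      rw [hTdef]
      congr 1
      funext u
      rw [neg_neg]
    rw [hint, hxc]
    have hsq : ((Real.sqrt x : ℝ):ℂ) = (T:ℂ) := by rw [hTdef]
    rw [hsq]
    have hexp : Complex.exp (-a * (T:ℂ)^2) = Complex.exp (-(a*(T:ℂ)^2)) := by
      rw [neg_mul]
    rw [hexp]
    set G := ∫ u in (0:ℝ)..T, Complex.exp (a*(u:ℂ)^2) with hGdef
    set E := Complex.exp (-(a*(T:ℂ)^2)) with hEdef
    clear_value G E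
    clear_value a
    clear hGdef hEdef hint hexp hw ha hadef
    ring
  rw [hxr, norm_mul]
  have hπ : ‖(2/(Real.pi:ℂ))‖ = 2/Real.pi := by
    rw [norm_div]
    have h2 : ‖(2:ℂ)‖ = 2 := by norm_num
    have hπ2 : ‖((Real.pi:ℝ):ℂ)‖ = Real.pi := by
      rw [Complex.norm_real, Real.norm_eq_abs, abs_of_pos Real.pi_pos]
    rw [h2, hπ2]
  rw [hπ]
  apply mul_le_mul_of_nonneg_left _ (by positivity)
  calc ‖(T:ℂ)^2 * (1 - 2*a*(T:ℂ)*Complex.exp (-(a*(T:ℂ)^2)) *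
          ∫ u in (0:ℝ)..T, Complex.exp (a*(u:ℂ)^2)) + 1/(2*a)‖ ≤ D * ‖a‖ / T^2 :=
        hcore a ha T hbT
    _ = D * ‖a‖ / x := by rw [hT2]

lemma summable_aux (δ : ℝ) (hδ : 0 < δ) (c1 c2 : ℝ) :
    Summable (fun k : ℤ => Real.exp (-δ*|(k:ℝ)|) * (c1 + c2*|(k:ℝ)|)) := by
  have hnat : Summable (fun n : ℕ => Real.exp (-δ*(n:ℝ)) * (c1 + c2*(n:ℝ))) := by
    have hrlt : ‖Real.exp (-δ)‖ < 1 := by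
      rw [Real.norm_eq_abs, abs_of_pos (Real.exp_pos _)]
      exact Real.exp_lt_one_iff.mpr (by linarith)
    have hs1 : Summable (fun n : ℕ => (Real.exp (-δ))^n) :=
      summable_geometric_of_lt_one (Real.exp_pos _).le (by
        rwa [Real.norm_eq_abs, abs_of_pos (Real.exp_pos _)] at hrlt)
    have hs2 : Summable (fun n : ℕ => (n:ℝ)^1 * (Real.exp (-δ))^n) :=
      summable_pow_mul_geometric_of_norm_lt_one 1 hrlt
    apply ((hs1.mul_left c1).add (hs2.mul_left c2)).congr
    intro n
    have h : (Real.exp (-δ))^n = Real.exp (-δ*(n:ℝ)) := by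
      rw [← Real.exp_nat_mul]
      ring_nf
    rw [h]
    ring
  apply Summable.of_nat_of_neg
  · apply hnat.congr
    intro n
    have h : |((n:ℤ):ℝ)| = (n:ℝ) := by
      push_cast
      exact abs_of_nonneg n.cast_nonneg
    rw [h]
  · apply hnat.congr
    intro n
    have h : |(((-(n:ℤ)):ℤ):ℝ)| = (n:ℝ) := by
      push_cast
      rw [abs_neg]
      exact abs_of_nonneg n.cast_nonneg
    rw [h]

/-- if `ρ̃(x) = Σ c_k ρ_{-ξ,k}(x)` is a positive real for all `x > 0`
(`ξ > 0`), then `Σ c_k/(ξ - ik)` is a real number `≤ 0`. -/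
theorem stmt17 (ξ : ℝ) (hξ : 0 < ξ) (C δ : ℝ) (hC : 0 < C) (hδ : 0 < δ)
    (c : ℤ → ℂ) (hconj : ∀ k : ℤ, c (-k) = starRingEnd ℂ (c k))
    (hdecay : ∀ k : ℤ, ‖c k‖ ≤ C * Real.exp (-δ * |(k : ℝ)|))
    (hpos : ∀ x : ℝ, 0 < x →
      (∑' k : ℤ, c k * rho (-ξ) k x).im = 0 ∧ 0 < (∑' k : ℤ, c k * rho (-ξ) k x).re) :
    (∑' k : ℤ, c k / ((ξ : ℂ) - (k : ℂ) * Complex.I)).im = 0 ∧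
    (∑' k : ℤ, c k / ((ξ : ℂ) - (k : ℂ) * Complex.I)).re ≤ 0 := by
  obtain ⟨b, hb1, D, hD0, hrb⟩ := rho_bound ξ hξ
  have hπ0 : (0:ℝ) < Real.pi := Real.pi_pos
  have hb0 : (0:ℝ) < b := lt_of_lt_of_le one_pos hb1
  have ha_re : ∀ k : ℤ, ((ξ:ℂ) - (k:ℂ)*Complex.I).re = ξ := by intro k; simp
  have hA_ge : ∀ k : ℤ, ξ ≤ ‖(ξ:ℂ) - (k:ℂ)*Complex.I‖ := by
    intro k
    have h := Complex.re_le_norm ((ξ:ℂ) - (k:ℂ)*Complex.I)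
    rw [ha_re k] at h
    exact h
  have hA0 : ∀ k : ℤ, (0:ℝ) < ‖(ξ:ℂ) - (k:ℂ)*Complex.I‖ := fun k => lt_of_lt_of_le hξ (hA_ge k)
  have hA_le : ∀ k : ℤ, ‖(ξ:ℂ) - (k:ℂ)*Complex.I‖ ≤ ξ + |(k:ℝ)| := by
    intro k
    calc ‖(ξ:ℂ) - (k:ℂ)*Complex.I‖ ≤ ‖(ξ:ℂ)‖ + ‖(k:ℂ)*Complex.I‖ := norm_sub_le _ _
      _ = ξ + |(k:ℝ)| := by
          rw [norm_mul, Complex.norm_real, Real.norm_eq_abs, Complex.norm_I,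
            Complex.norm_intCast, mul_one,
            abs_of_pos hξ]
  set f : ℝ → ℤ → ℂ := fun x k => c k * ((x:ℂ) * rho (-ξ) k x) with hfdef
  set g : ℤ → ℂ := fun k => c k * (-(1/((Real.pi:ℂ) * ((ξ:ℂ) - (k:ℂ)*Complex.I)))) with hgdef
  have hgn : ∀ k : ℤ, ‖-(1/((Real.pi:ℂ) * ((ξ:ℂ) - (k:ℂ)*Complex.I)))‖ ≤ 1/(Real.pi*ξ) := by
    intro k
    rw [norm_neg, norm_div, norm_one, norm_mul, Complex.norm_real,
      Real.norm_eq_abs, abs_of_pos hπ0]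
    apply one_div_le_one_div_of_le (by positivity)
    exact mul_le_mul_of_nonneg_left (hA_ge k) hπ0.le
  set bound : ℤ → ℝ := fun k => (C * Real.exp (-δ*|(k:ℝ)|)) *
    (1/(Real.pi*ξ) + (2/Real.pi)*(D*(ξ+|(k:ℝ)|)/b^2)) with hbddef
  have hsum : Summable bound := by
    apply (summable_aux δ hδ (C*(1/(Real.pi*ξ) + 2*D*ξ/(Real.pi*b^2))) (C*(2*D/(Real.pi*b^2)))).congr
    intro k
    simp only [hbddef]
    ring
  have h_bound : ∀ᶠ x:ℝ in atTop, ∀ k : ℤ, ‖f x k‖ ≤ bound k := by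
    filter_upwards [eventually_ge_atTop (b^2)] with x hx
    intro k
    have hx0 : (0:ℝ) < x := lt_of_lt_of_le (by positivity) hx
    have h1 := hrb k x hx
    have h2 : ‖(x:ℂ) * rho (-ξ) k x‖
        ≤ 1/(Real.pi*ξ) + (2/Real.pi)*(D*(ξ+|(k:ℝ)|)/b^2) := by
      have h3 : ‖(x:ℂ) * rho (-ξ) k x‖
          ≤ ‖(x:ℂ) * rho (-ξ) k x - (-(1/((Real.pi:ℂ)*((ξ:ℂ) - (k:ℂ)*Complex.I))))‖
            + ‖-(1/((Real.pi:ℂ)*((ξ:ℂ) - (k:ℂ)*Complex.I)))‖ := by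
        calc ‖(x:ℂ) * rho (-ξ) k x‖
            = ‖((x:ℂ) * rho (-ξ) k x - (-(1/((Real.pi:ℂ)*((ξ:ℂ) - (k:ℂ)*Complex.I)))))
              + (-(1/((Real.pi:ℂ)*((ξ:ℂ) - (k:ℂ)*Complex.I))))‖ := by rw [sub_add_cancel]
          _ ≤ _ := norm_add_le _ _
      have h4 : (2/Real.pi) * (D * ‖(ξ:ℂ) - (k:ℂ)*Complex.I‖ / x)
          ≤ (2/Real.pi)*(D*(ξ+|(k:ℝ)|)/b^2) := by
        apply mul_le_mul_of_nonneg_left _ (by positivity)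
        apply div_le_div₀ (by positivity) (mul_le_mul_of_nonneg_left (hA_le k) hD0.le)
          (by positivity) hx
      linarith [hgn k, h1]
    calc ‖f x k‖ = ‖c k‖ * ‖(x:ℂ) * rho (-ξ) k x‖ := by simp only [hfdef]; exact norm_mul _ _
      _ ≤ (C * Real.exp (-δ*|(k:ℝ)|)) * (1/(Real.pi*ξ) + (2/Real.pi)*(D*(ξ+|(k:ℝ)|)/b^2)) := by
          apply mul_le_mul (hdecay k) h2 (norm_nonneg _) (by positivity)
      _ = bound k := by simp only [hbddef]
  have h_lim : ∀ k : ℤ, Tendsto (fun x:ℝ => f x k) atTop (𝓝 (g k)) := by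
    intro k
    rw [← tendsto_sub_nhds_zero_iff]
    have hbnd : ∀ᶠ x:ℝ in atTop,
        ‖f x k - g k‖ ≤ (‖c k‖ * ((2/Real.pi) * (D * ‖(ξ:ℂ) - (k:ℂ)*Complex.I‖)))/x := by
      filter_upwards [eventually_ge_atTop (b^2), eventually_gt_atTop (0:ℝ)] with x hx hx0
      have h1 := hrb k x hx
      calc ‖f x k - g k‖
          = ‖c k‖ * ‖(x:ℂ) * rho (-ξ) k x - (-(1/((Real.pi:ℂ)*((ξ:ℂ) - (k:ℂ)*Complex.I))))‖ := by
            simp only [hfdef, hgdef, ← mul_sub, norm_mul]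
        _ ≤ ‖c k‖ * ((2/Real.pi) * (D * ‖(ξ:ℂ) - (k:ℂ)*Complex.I‖ / x)) :=
            mul_le_mul_of_nonneg_left h1 (norm_nonneg _)
        _ = (‖c k‖ * ((2/Real.pi) * (D * ‖(ξ:ℂ) - (k:ℂ)*Complex.I‖)))/x := by ring
    have hten : Tendsto (fun x:ℝ => (‖c k‖ * ((2/Real.pi) * (D * ‖(ξ:ℂ) - (k:ℂ)*Complex.I‖)))/x)
        atTop (𝓝 0) := Tendsto.div_atTop tendsto_const_nhds tendsto_id
    exact squeeze_zero_norm' hbnd hten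
  have hF := tendsto_tsum_of_dominated_convergence hsum h_lim h_bound
  have hFeq : ∀ x : ℝ, (∑' k : ℤ, f x k) = (x:ℂ) * ∑' k : ℤ, c k * rho (-ξ) k x := by
    intro x
    rw [← tsum_mul_left]
    exact tsum_congr (fun k => by simp only [hfdef]; ring)
  set L := ∑' k : ℤ, g k with hLdef
  have hLim0 : L.im = 0 := by
    have h1 : Tendsto (fun x:ℝ => (∑' k : ℤ, f x k).im) atTop (𝓝 L.im) :=
      (Complex.continuous_im.tendsto L).comp hF
    have h2 : (fun x:ℝ => (∑' k : ℤ, f x k).im) =ᶠ[atTop] (fun _ => (0:ℝ)) := by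
      filter_upwards [eventually_gt_atTop (0:ℝ)] with x hx
      rw [hFeq x, Complex.mul_im, Complex.ofReal_re, Complex.ofReal_im, (hpos x hx).1]
      ring
    exact tendsto_nhds_unique (h1.congr' h2) tendsto_const_nhds
  have hLre : 0 ≤ L.re := by
    have h1 : Tendsto (fun x:ℝ => (∑' k : ℤ, f x k).re) atTop (𝓝 L.re) :=
      (Complex.continuous_re.tendsto L).comp hF
    apply ge_of_tendsto h1
    filter_upwards [eventually_gt_atTop (0:ℝ)] with x hx
    rw [hFeq x, Complex.mul_re, Complex.ofReal_re, Complex.ofReal_im, (hpos x hx).1]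
    nlinarith [(hpos x hx).2]
  have hπc : ((Real.pi:ℝ):ℂ) ≠ 0 := Complex.ofReal_ne_zero.mpr Real.pi_ne_zero
  have hLS : L = (-(1/((Real.pi:ℝ):ℂ))) * ∑' k : ℤ, c k / ((ξ:ℂ) - (k:ℂ)*Complex.I) := by
    rw [hLdef, ← tsum_mul_left]
    apply tsum_congr
    intro k
    simp only [hgdef]
    rw [div_eq_mul_inv, div_eq_mul_inv, div_eq_mul_inv, mul_inv]
    ring
  have hS : (∑' k : ℤ, c k / ((ξ:ℂ) - (k:ℂ)*Complex.I)) = (-((Real.pi:ℝ):ℂ)) * L := by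
    rw [hLS, ← mul_assoc, show (-((Real.pi:ℝ):ℂ)) * (-(1/((Real.pi:ℝ):ℂ))) = 1 by
      field_simp, one_mul]
  constructor
  · rw [hS, Complex.mul_im]
    simp [hLim0]
  · rw [hS, Complex.mul_re]
    simp only [Complex.neg_re, Complex.ofReal_re, Complex.neg_im, Complex.ofReal_im, neg_zero,
      zero_mul, sub_zero]
    nlinarith [hLre]
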